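/- Let τ ∈ ℝ with τ ≠ 0 and let 0 ≤ θ < 1/2. Then there exist real numbers t₀ > 0 and t₁ > 0 such that: (i) Re Q_τ(t) ≥ 1/2 for all real t with |t| ≥ t₀; (ii) Re Q_τ(t) ≥ −1 for all t ∈ ℝ ∪ {iσ : σ ∈ [−θ, θ]}; and (iii) −sgn(τ) · Im Q_τ(t) ≥ t₁ for all t ∈ [−t₀, t₀] ∪ {iσ : σ ∈ [−θ, θ]}. -/

import Mathlib

lemma Qx (x : ℝ) :
    (((1:ℂ) - Complex.I * (x : ℂ)) / (1 + Complex.I * (x : ℂ))).re = (1 - x^2) / (1 + x^2) ∧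
    (((1:ℂ) - Complex.I * (x : ℂ)) / (1 + Complex.I * (x : ℂ))).im = -(2*x) / (1 + x^2) := by
  have h : (1:ℝ) + x * x ≠ 0 := by nlinarith [mul_self_nonneg x]
  have h2 : (1:ℝ) + x ^ 2 ≠ 0 := by positivity
  constructor
  · simp only [Complex.div_re, Complex.div_im, Complex.normSq_apply, Complex.one_re,
      Complex.one_im, Complex.sub_re, Complex.sub_im, Complex.add_re, Complex.add_im,
      Complex.mul_re, Complex.mul_im, Complex.I_re, Complex.I_im, Complex.ofReal_re,
      Complex.ofReal_im]
    field_simp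
    try ring
    field_simp
    ring
  · simp only [Complex.div_re, Complex.div_im, Complex.normSq_apply, Complex.one_re,
      Complex.one_im, Complex.sub_re, Complex.sub_im, Complex.add_re, Complex.add_im,
      Complex.mul_re, Complex.mul_im, Complex.I_re, Complex.I_im, Complex.ofReal_re,
      Complex.ofReal_im]
    field_simp
    try ring
    field_simp
    ring

lemma Qcore (a c : ℝ) (hc : 0 < c) :
    (((1:ℂ) - Complex.I * ((a/c : ℝ) : ℂ)) / (1 + Complex.I * ((a/c : ℝ) : ℂ))).re
      = (c^2 - a^2) / (c^2 + a^2) ∧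
    (((1:ℂ) - Complex.I * ((a/c : ℝ) : ℂ)) / (1 + Complex.I * ((a/c : ℝ) : ℂ))).im
      = -(2*a*c) / (c^2 + a^2) := by
  have hc' : c ≠ 0 := hc.ne'
  have hd : (c^2 + a^2) ≠ 0 := by positivity
  have h2 : ((1:ℝ) + (a/c)^2) ≠ 0 := by positivity
  constructor
  · rw [(Qx (a/c)).1]; field_simp; try ring
  · rw [(Qx (a/c)).2]; field_simp; try ring



/-- `Q_τ(t) = (1 − i sinh(πτ)/cosh(πt))/(1 + i sinh(πτ)/cosh(πt))`. -/
noncomputable def Qfun (τ : ℝ) (t : ℂ) : ℂ :=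
  (1 - Complex.I * (Real.sinh (Real.pi * τ) : ℂ) / Complex.cosh (Real.pi * t)) /
    (1 + Complex.I * (Real.sinh (Real.pi * τ) : ℂ) / Complex.cosh (Real.pi * t))

lemma Qfun_re_im (τ : ℝ) (t : ℂ) (c : ℝ) (hc : 0 < c)
    (h : Complex.cosh (Real.pi * t) = (c : ℂ)) :
    (Qfun τ t).re = (c^2 - (Real.sinh (Real.pi * τ))^2) / (c^2 + (Real.sinh (Real.pi * τ))^2) ∧
    (Qfun τ t).im = -(2 * Real.sinh (Real.pi * τ) * c) / (c^2 + (Real.sinh (Real.pi * τ))^2) := by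
  set a := Real.sinh (Real.pi * τ)
  have hQ : Qfun τ t
      = ((1:ℂ) - Complex.I * ((a/c : ℝ) : ℂ)) / (1 + Complex.I * ((a/c : ℝ) : ℂ)) := by
    unfold Qfun
    rw [h]
    have : Complex.I * (a : ℂ) / (c : ℂ) = Complex.I * ((a/c : ℝ) : ℂ) := by
      push_cast
      rw [mul_div_assoc]
    rw [this]
  rw [hQ]
  exact Qcore a c hc

lemma cosh_real (t : ℝ) :
    Complex.cosh ((Real.pi : ℂ) * (t : ℂ)) = ((Real.cosh (Real.pi * t) : ℝ) : ℂ) := by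
  rw [← Complex.ofReal_mul, Complex.ofReal_cosh]

lemma cosh_imag (σ : ℝ) :
    Complex.cosh ((Real.pi : ℂ) * (Complex.I * (σ : ℂ)))
      = ((Real.cos (Real.pi * σ) : ℝ) : ℂ) := by
  rw [show (Real.pi : ℂ) * (Complex.I * (σ : ℂ)) = ((Real.pi : ℂ) * σ) * Complex.I by ring,
    Complex.cosh_mul_I, ← Complex.ofReal_mul, Complex.ofReal_cos]

lemma frac_mono (a m C c : ℝ) (hm : 0 < m) (hmc : m ≤ c) (hcC : c ≤ C) :
    2 * |a| * m / (C^2 + a^2) ≤ 2 * |a| * c / (c^2 + a^2) := by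
  have hc : 0 < c := hm.trans_le hmc
  have hC : 0 < C := hc.trans_le hcC
  have h1 : (0:ℝ) < c^2 + a^2 := by positivity
  have h2 : (0:ℝ) < C^2 + a^2 := by positivity
  rw [div_le_div_iff₀ h2 h1]
  have ha : 0 ≤ |a| := abs_nonneg a
  nlinarith [mul_nonneg (sub_nonneg.2 hmc) (sq_nonneg a),
    mul_nonneg hc.le (mul_nonneg (sub_nonneg.2 hcC) (add_nonneg hc.le hC.le)),
    mul_nonneg (sub_nonneg.2 hmc) (sq_nonneg c)]


set_option maxHeartbeats 1000000 in
/-- Properties of `Q_τ` on `ℝ ∪ {iσ : |σ| ≤ θ}` for `τ ≠ 0`, `0 ≤ θ < 1/2`: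
there are `t₀, t₁ > 0` with (i) `Re Q_τ(t) ≥ 1/2` for real `|t| ≥ t₀`;
(ii) `Re Q_τ(t) ≥ −1` on the whole domain; (iii) `−sgn(τ)·Im Q_τ(t) ≥ t₁`
for real `|t| ≤ t₀` and for `t = iσ`, `|σ| ≤ θ`. -/
theorem Qfun_properties (τ : ℝ) (hτ : τ ≠ 0) (θ : ℝ) (hθ0 : 0 ≤ θ) (hθ : θ < 1 / 2) :
    ∃ t₀ > (0 : ℝ), ∃ t₁ > (0 : ℝ),
      (∀ t : ℝ, t₀ ≤ |t| → 1 / 2 ≤ (Qfun τ (t : ℂ)).re) ∧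
      (∀ t : ℝ, -1 ≤ (Qfun τ (t : ℂ)).re) ∧
      (∀ σ : ℝ, |σ| ≤ θ → -1 ≤ (Qfun τ (Complex.I * σ)).re) ∧
      (∀ t : ℝ, |t| ≤ t₀ → t₁ ≤ -Real.sign τ * (Qfun τ (t : ℂ)).im) ∧
      (∀ σ : ℝ, |σ| ≤ θ → t₁ ≤ -Real.sign τ * (Qfun τ (Complex.I * σ)).im) := by
  set a := Real.sinh (Real.pi * τ) with ha_def
  have hπ : (0:ℝ) < Real.pi := Real.pi_pos
  have ha : a ≠ 0 := by
    rcases hτ.lt_or_gt with h | h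
    · exact ne_of_lt (by rw [ha_def]; exact Real.sinh_neg_iff.2 (by nlinarith))
    · exact ne_of_gt (by rw [ha_def]; exact Real.sinh_pos_iff.2 (by nlinarith))
  have haabs : 0 < |a| := abs_pos.2 ha
  have hsign : Real.sign τ * a = |a| := by
    rcases hτ.lt_or_gt with h | h
    · have h1 : a < 0 := by rw [ha_def]; exact Real.sinh_neg_iff.2 (by nlinarith)
      rw [Real.sign_of_neg h, abs_of_neg h1]; ring
    · have h1 : 0 < a := by rw [ha_def]; exact Real.sinh_pos_iff.2 (by nlinarith)
      rw [Real.sign_of_pos h, abs_of_pos h1]; ring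
  -- parameters
  set t₀ : ℝ := 2 * |a| + 1 with ht₀_def
  have ht₀pos : 0 < t₀ := by positivity
  set C : ℝ := Real.cosh (Real.pi * t₀) with hC_def
  have hC1 : 1 ≤ C := Real.one_le_cosh _
  have hC2 : 2 * |a| ≤ C := by
    have he := Real.add_one_le_exp (Real.pi * t₀)
    have he2 : 0 < Real.exp (-(Real.pi * t₀)) := Real.exp_pos _
    have hπ3 : (3:ℝ) < Real.pi := Real.pi_gt_three
    rw [hC_def, Real.cosh_eq]
    nlinarith [haabs]
  set m : ℝ := Real.cos (Real.pi * θ) with hm_def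
  have hθπ : Real.pi * θ < Real.pi / 2 := by nlinarith
  have hm : 0 < m := Real.cos_pos_of_mem_Ioo ⟨by nlinarith, hθπ⟩
  have hm1 : m ≤ 1 := Real.cos_le_one _
  set t₁ : ℝ := 2 * |a| * m / (C^2 + a^2) with ht₁_def
  have ht₁pos : 0 < t₁ := by positivity
  -- generic facts for a point with cosh value c
  have key : ∀ (t : ℂ) (c : ℝ), 0 < c → Complex.cosh (Real.pi * t) = (c : ℂ) →
      ((Qfun τ t).re = (c^2 - a^2) / (c^2 + a^2) ∧
       (Qfun τ t).im = -(2 * a * c) / (c^2 + a^2)) := by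
    intro t c hc h
    exact Qfun_re_im τ t c hc h
  -- bounds for cos on the segment
  have hcos : ∀ σ : ℝ, |σ| ≤ θ → m ≤ Real.cos (Real.pi * σ) ∧ Real.cos (Real.pi * σ) ≤ 1 := by
    intro σ hσ
    constructor
    · rw [← Real.cos_abs (Real.pi * σ)]
      apply Real.cos_le_cos_of_nonneg_of_le_pi (abs_nonneg _) (by nlinarith)
      rw [abs_mul, abs_of_pos hπ]
      have := abs_nonneg σ
      nlinarith
    · exact Real.cos_le_one _
  refine ⟨t₀, ht₀pos, t₁, ht₁pos, ?_, ?_, ?_, ?_, ?_⟩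
  · -- (i)
    intro t ht
    have hc : 0 < Real.cosh (Real.pi * t) := by positivity
    obtain ⟨hre, _⟩ := key (t : ℂ) _ hc (cosh_real t)
    rw [hre]
    have hCc : C ≤ Real.cosh (Real.pi * t) := by
      rw [hC_def]
      apply Real.cosh_le_cosh.2
      rw [abs_mul, abs_mul, abs_of_pos hπ, abs_of_pos ht₀pos]
      nlinarith [abs_nonneg t]
    set c := Real.cosh (Real.pi * t)
    have h2a : 2 * |a| ≤ c := hC2.trans hCc
    have hd : (0:ℝ) < c^2 + a^2 := by positivity
    rw [le_div_iff₀ hd]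
    nlinarith [sq_abs a, abs_nonneg a]
  · -- (ii) real
    intro t
    have hc : 0 < Real.cosh (Real.pi * t) := by positivity
    obtain ⟨hre, _⟩ := key (t : ℂ) _ hc (cosh_real t)
    rw [hre]
    set c := Real.cosh (Real.pi * t)
    have hd : (0:ℝ) < c^2 + a^2 := by positivity
    rw [neg_le, ← neg_div, div_le_one hd]
    nlinarith
  · -- (ii) imaginary
    intro σ hσ
    obtain ⟨hmc, _⟩ := hcos σ hσ
    have hc : 0 < Real.cos (Real.pi * σ) := lt_of_lt_of_le hm hmc
    obtain ⟨hre, _⟩ := key (Complex.I * σ) _ hc (cosh_imag σ)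
    rw [hre]
    set c := Real.cos (Real.pi * σ)
    have hd : (0:ℝ) < c^2 + a^2 := by positivity
    rw [neg_le, ← neg_div, div_le_one hd]
    nlinarith
  · -- (iii) real
    intro t ht
    have hc : 0 < Real.cosh (Real.pi * t) := by positivity
    obtain ⟨_, him⟩ := key (t : ℂ) _ hc (cosh_real t)
    rw [him]
    set c := Real.cosh (Real.pi * t) with hc_def
    have h1c : 1 ≤ c := Real.one_le_cosh _
    have hcC : c ≤ C := by
      rw [hC_def, hc_def]
      apply Real.cosh_le_cosh.2
      rw [abs_mul, abs_mul, abs_of_pos hπ, abs_of_pos ht₀pos]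
      nlinarith [abs_nonneg t]
    have hd : (0:ℝ) < c^2 + a^2 := by positivity
    have : -Real.sign τ * (-(2 * a * c) / (c^2 + a^2)) = 2 * |a| * c / (c^2 + a^2) := by
      rw [← hsign]; ring
    rw [this, ht₁_def]
    have := frac_mono a m C c hm (hm1.trans h1c) hcC
    linarith
  · -- (iii) imaginary
    intro σ hσ
    obtain ⟨hmc, hc1⟩ := hcos σ hσ
    have hc : 0 < Real.cos (Real.pi * σ) := lt_of_lt_of_le hm hmc
    obtain ⟨_, him⟩ := key (Complex.I * σ) _ hc (cosh_imag σ)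
    rw [him]
    set c := Real.cos (Real.pi * σ)
    have hd : (0:ℝ) < c^2 + a^2 := by positivity
    have : -Real.sign τ * (-(2 * a * c) / (c^2 + a^2)) = 2 * |a| * c / (c^2 + a^2) := by
      rw [← hsign]; ring
    rw [this, ht₁_def]
    have := frac_mono a m C c hm hmc (hc1.trans hC1)
    linarith
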